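/- For a complex square matrix A with no eigenvalues of zero real part, sign(A) commutes with A and sign(A) = A·(A²)^{-1/2}, where (A²)^{-1/2} is the inverse of the principal square root of A². -/
import Mathlib

open Matrix Polynomial

lemma eval_charpoly_eq_det {ι : Type*} [Fintype ι] [DecidableEq ι]
    (M : Matrix ι ι ℂ) (μ : ℂ) :
    M.charpoly.eval μ = (algebraMap ℂ (Matrix ι ι ℂ) μ - M).det := by
  rw [Matrix.charpoly, ← Polynomial.coe_evalRingHom, RingHom.map_det]
  congr 1
  ext i j
  by_cases h : i = j
  · subst h
    simp [Matrix.charmatrix_apply_eq, Matrix.algebraMap_matrix_apply]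
  · simp [Matrix.charmatrix_apply_ne _ _ _ h, Matrix.algebraMap_matrix_apply, h]

lemma root_charpoly_mem_spectrum {ι : Type*} [Fintype ι] [DecidableEq ι]
    {M : Matrix ι ι ℂ} {μ : ℂ} (h : M.charpoly.eval μ = 0) : μ ∈ spectrum ℂ M := by
  rw [spectrum.mem_iff]
  intro hu
  rw [Matrix.isUnit_iff_isUnit_det, isUnit_iff_ne_zero] at hu
  rw [eval_charpoly_eq_det] at h
  exact hu h

lemma aeval_intertwine {ι : Type*} [Fintype ι] [DecidableEq ι]
    {X Y D : Matrix ι ι ℂ} (h : X * D = D * Y) (P : ℂ[X]) :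
    (aeval X P) * D = D * (aeval Y P) := by
  have hpow : ∀ n : ℕ, X ^ n * D = D * Y ^ n := by
    intro n
    induction n with
    | zero => simp
    | succ n ih =>
      rw [pow_succ, pow_succ, mul_assoc, h, ← mul_assoc, ih, mul_assoc]
  induction P using Polynomial.induction_on' with
  | add p q hp hq => simp [add_mul, mul_add, hp, hq]
  | monomial n a =>
    simp only [aeval_monomial]
    rw [mul_assoc, hpow, ← mul_assoc, Algebra.commutes a, mul_assoc]

/-- Uniqueness of the square root with spectrum in the open right half-plane. -/
lemma sqrt_unique {ι : Type*} [Fintype ι] [DecidableEq ι] {X Y : Matrix ι ι ℂ}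
    (h : X * X = Y * Y) (hX : ∀ μ ∈ spectrum ℂ X, 0 < μ.re)
    (hY : ∀ μ ∈ spectrum ℂ Y, 0 < μ.re) : X = Y := by
  cases isEmpty_or_nonempty ι with
  | inl _ => exact Subsingleton.elim _ _
  | inr _ =>
    have hD : X * (X - Y) = (X - Y) * (-Y) := by
      simp only [mul_sub, sub_mul, mul_neg, neg_sub, h]
    have key := aeval_intertwine hD X.charpoly
    rw [Matrix.aeval_self_charpoly, zero_mul] at key
    have hunit : IsUnit (aeval (-Y) X.charpoly) := by
      by_contra hc
      have h0 : (0 : ℂ) ∈ spectrum ℂ (aeval (-Y) X.charpoly) := spectrum.zero_mem ℂ hc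
      have hdeg : 0 < X.charpoly.degree := by
        rw [Matrix.charpoly_degree_eq_dim]
        exact_mod_cast Fintype.card_pos
      rw [spectrum.map_polynomial_aeval_of_degree_pos _ _ hdeg] at h0
      obtain ⟨μ, hμ, hμ0⟩ := h0
      have hμY : -μ ∈ spectrum ℂ Y := by
        rw [← spectrum.neg_eq, Set.mem_neg] at hμ
        exact hμ
      have h1 : 0 < (-μ).re := hY _ hμY
      have h2 : 0 < μ.re := hX μ (root_charpoly_mem_spectrum hμ0)
      rw [Complex.neg_re] at h1
      linarith
    have hD0 : X - Y = 0 := by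
      have h1 : (X - Y) * (aeval (-Y) X.charpoly) = 0 := key.symm
      have h2 := Matrix.mul_nonsing_inv _ ((Matrix.isUnit_iff_isUnit_det _).mp hunit)
      calc X - Y = (X - Y) * ((aeval (-Y) X.charpoly) * (aeval (-Y) X.charpoly)⁻¹) := by
            rw [h2, mul_one]
        _ = ((X - Y) * (aeval (-Y) X.charpoly)) * (aeval (-Y) X.charpoly)⁻¹ := by
            rw [mul_assoc]
        _ = 0 := by rw [h1, zero_mul]
    exact sub_eq_zero.mp hD0

lemma spectrum_fromBlocks_subset {p q : ℕ}
    (B : Matrix (Fin p) (Fin p) ℂ) (C : Matrix (Fin q) (Fin q) ℂ) :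
    spectrum ℂ (Matrix.fromBlocks B 0 0 C) ⊆ spectrum ℂ B ∪ spectrum ℂ C := by
  intro μ hμ
  rw [spectrum.mem_iff] at hμ
  rw [Set.mem_union, spectrum.mem_iff, spectrum.mem_iff]
  by_contra hc
  push_neg at hc
  apply hμ
  have heq : algebraMap ℂ (Matrix (Fin p ⊕ Fin q) (Fin p ⊕ Fin q) ℂ) μ
      - Matrix.fromBlocks B 0 0 C
      = Matrix.fromBlocks (algebraMap ℂ _ μ - B) 0 0 (algebraMap ℂ _ μ - C) := by
    ext (i | i) (j | j) <;>
      simp [Matrix.algebraMap_matrix_apply, Matrix.sub_apply]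
  rw [heq, Matrix.isUnit_iff_isUnit_det, Matrix.det_fromBlocks_zero₂₁]
  exact ((Matrix.isUnit_iff_isUnit_det _).mp hc.1).mul
    ((Matrix.isUnit_iff_isUnit_det _).mp hc.2)

open Classical in
/-- The principal square root of a complex matrix: the unique square root whose
spectrum lies in the open right half-plane (junk value `0` if no such root exists). -/
noncomputable def principalSqrt {ι : Type*} [Fintype ι] [DecidableEq ι]
    (A : Matrix ι ι ℂ) : Matrix ι ι ℂ :=
  if h : ∃ X : Matrix ι ι ℂ, X * X = A ∧ ∀ μ ∈ spectrum ℂ X, 0 < μ.re then h.choose else 0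

/-- The matrix sign function, `sign A = A · ((A²)^{1/2})⁻¹`. -/
noncomputable def matrixSign {ι : Type*} [Fintype ι] [DecidableEq ι]
    (A : Matrix ι ι ℂ) : Matrix ι ι ℂ :=
  A * (principalSqrt (A * A))⁻¹

/-- For `A` with no eigenvalues of zero real part (defined via the Jordan form as
`Z·diag(−I,I)·Z⁻¹`), the sign `S` commutes with `A` and `S = A·(A²)^{-1/2}`. -/
theorem matrix_sign_commutes_and_eq {p q : ℕ}
    (Z : Matrix (Fin p ⊕ Fin q) (Fin p ⊕ Fin q) ℂ) (hZ : IsUnit Z)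
    (J₁ : Matrix (Fin p) (Fin p) ℂ) (J₂ : Matrix (Fin q) (Fin q) ℂ)
    (hJ₁ : ∀ μ ∈ spectrum ℂ J₁, μ.re < 0)
    (hJ₂ : ∀ μ ∈ spectrum ℂ J₂, 0 < μ.re)
    (A S : Matrix (Fin p ⊕ Fin q) (Fin p ⊕ Fin q) ℂ)
    (hA : A = Z * Matrix.fromBlocks J₁ 0 0 J₂ * Z⁻¹)
    (hS : S = Z * Matrix.fromBlocks (-1) 0 0 1 * Z⁻¹) :
    S * A = A * S ∧ S = A * (principalSqrt (A * A))⁻¹ := by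
  have hZd : IsUnit Z.det := (Matrix.isUnit_iff_isUnit_det _).mp hZ
  have hZZ' : Z * Z⁻¹ = 1 := Matrix.mul_nonsing_inv Z hZd
  have hZ'Z : Z⁻¹ * Z = 1 := Matrix.nonsing_inv_mul Z hZd
  have conj_mul : ∀ M N : Matrix (Fin p ⊕ Fin q) (Fin p ⊕ Fin q) ℂ,
      (Z * M * Z⁻¹) * (Z * N * Z⁻¹) = Z * (M * N) * Z⁻¹ := by
    intro M N
    simp only [Matrix.mul_assoc]
    rw [← Matrix.mul_assoc Z⁻¹ Z, hZ'Z, Matrix.one_mul]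
  set X : Matrix (Fin p ⊕ Fin q) (Fin p ⊕ Fin q) ℂ :=
    Z * Matrix.fromBlocks (-J₁) 0 0 J₂ * Z⁻¹ with hXdef
  have hSA : S * A = Z * Matrix.fromBlocks (-J₁) 0 0 J₂ * Z⁻¹ := by
    rw [hS, hA, conj_mul]
    congr 2
    simp [Matrix.fromBlocks_multiply]
  have hAS : A * S = Z * Matrix.fromBlocks (-J₁) 0 0 J₂ * Z⁻¹ := by
    rw [hS, hA, conj_mul]
    congr 2
    simp [Matrix.fromBlocks_multiply]
  have hXX : X * X = A * A := by
    rw [hXdef, hA, conj_mul, conj_mul]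
    congr 2
    simp [Matrix.fromBlocks_multiply]
  have hspec : spectrum ℂ X = spectrum ℂ (Matrix.fromBlocks (-J₁) 0 0 J₂) := by
    have hX2 : X = (hZ.unit : Matrix (Fin p ⊕ Fin q) (Fin p ⊕ Fin q) ℂ)
        * Matrix.fromBlocks (-J₁) 0 0 J₂
        * ((hZ.unit⁻¹ : (Matrix (Fin p ⊕ Fin q) (Fin p ⊕ Fin q) ℂ)ˣ)
          : Matrix (Fin p ⊕ Fin q) (Fin p ⊕ Fin q) ℂ) := by
      rw [Matrix.coe_units_inv, hZ.unit_spec]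
    rw [hX2, spectrum.units_conjugate]
  have hXspec : ∀ μ ∈ spectrum ℂ X, 0 < μ.re := by
    intro μ hμ
    rw [hspec] at hμ
    rcases spectrum_fromBlocks_subset _ _ hμ with h | h
    · rw [← spectrum.neg_eq, Set.mem_neg] at h
      have := hJ₁ _ h
      rw [Complex.neg_re] at this
      linarith
    · exact hJ₂ _ h
  have hPS : principalSqrt (A * A) = X := by
    rw [principalSqrt]
    have hex : ∃ W : Matrix (Fin p ⊕ Fin q) (Fin p ⊕ Fin q) ℂ,
        W * W = A * A ∧ ∀ μ ∈ spectrum ℂ W, 0 < μ.re := ⟨X, hXX, hXspec⟩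
    rw [dif_pos hex]
    exact sqrt_unique (hex.choose_spec.1.trans hXX.symm) hex.choose_spec.2 hXspec
  have hSX : S * X = A := by
    rw [hS, hXdef, hA, conj_mul]
    congr 2
    simp [Matrix.fromBlocks_multiply]
  have hXunit : IsUnit X := by
    apply spectrum.isUnit_of_zero_notMem ℂ
    intro h0
    exact absurd (hXspec 0 h0) (by norm_num)
  refine ⟨hSA.trans hAS.symm, ?_⟩
  rw [hPS, ← hSX, Matrix.mul_assoc,
    Matrix.mul_nonsing_inv X ((Matrix.isUnit_iff_isUnit_det _).mp hXunit), Matrix.mul_one]
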